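/- Let G be a graph with terminals T, and let S be a partition of V \ T into clusters such that each cluster R ∈ S is (1/3)-well-linked (i.e., for every partition (A,B) of R, |E(A,B)| ≥ (1/3)·min{|out(R)∩out(A)|, |out(R)∩out(B)|}). Let H be obtained from G by contracting each cluster of S into a super-node. Then for every partition (T_A, T_B) of T, MinCut_H(T_A, T_B) ≤ 3·MinCut_G(T_A, T_B). -/

import Mathlib

open scoped Classical

namespace VS

/-- A walk in a multigraph whose edges `E` have endpoints given by `ends`. -/
structure Walk (V : Type*) (E : Type*) (ends : E → Sym2 V) where
  n : ℕ
  vert : Fin (n + 1) → V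
  edge : Fin n → E
  coh : ∀ i : Fin n, ends (edge i) = s(vert i.castSucc, vert i.succ)

namespace Walk

variable {V E : Type*} {ends : E → Sym2 V}

def start (w : Walk V E ends) : V := w.vert 0

def finish (w : Walk V E ends) : V := w.vert (Fin.last w.n)

def uses (w : Walk V E ends) (f : E) : Prop := ∃ i, w.edge i = f

/-- Number of occurrences of the edge `f` on the walk. -/
noncomputable def mult (w : Walk V E ends) (f : E) : ℕ :=
  Nat.card {i : Fin w.n // w.edge i = f}

/-- The first edge of the walk, if any. -/
noncomputable def fe (w : Walk V E ends) : Option E :=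
  if h : 0 < w.n then some (w.edge ⟨0, h⟩) else none

/-- The last edge of the walk, if any. -/
noncomputable def le (w : Walk V E ends) : Option E :=
  if h : 0 < w.n then some (w.edge ⟨w.n - 1, by omega⟩) else none

/-- All edges of the walk other than the first and the last one have both
endpoints in `S` (i.e. the walk is contained in `S`). -/
def InternalIn (w : Walk V E ends) (S : Set V) : Prop :=
  ∀ i : Fin w.n, (i : ℕ) ≠ 0 → (i : ℕ) + 1 ≠ w.n → ∀ x ∈ ends (w.edge i), x ∈ S

end Walk

variable {V V' E : Type*}

/-- `e` has exactly one endpoint in `S`, i.e. `e ∈ out(S)`. -/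
def Out (ends : E → Sym2 V) (S : Set V) (e : E) : Prop :=
  ∃ u v, ends e = s(u, v) ∧ u ∈ S ∧ v ∉ S

/-- `e` has one endpoint in `A` and the other one in `B`. -/
def Crosses (ends : E → Sym2 V) (A B : Set V) (e : E) : Prop :=
  ∃ u v, ends e = s(u, v) ∧ u ∈ A ∧ v ∈ B

noncomputable def outCard (ends : E → Sym2 V) (S : Set V) : ℕ :=
  Nat.card {e : E // Out ends S e}

noncomputable def crossCard (ends : E → Sym2 V) (A B : Set V) : ℕ :=
  Nat.card {e : E // Crosses ends A B e}

/-- Value of the minimum edge cut separating `TA` from `TB` (unit capacities). -/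
noncomputable def minCut (ends : E → Sym2 V) (TA TB : Set V) : ℕ :=
  sInf { n : ℕ | ∃ A : Set V, TA ⊆ A ∧ Disjoint A TB ∧ n = outCard ends A }

/-- `R` is `α`-well-linked: for every partition `(A, B)` of `R`,
`|E(A,B)| ≥ α · min (|out R ∩ out A|) (|out R ∩ out B|)`. -/
def WellLinked (ends : E → Sym2 V) (α : ℝ) (R : Set V) : Prop :=
  ∀ A B : Set V, A ∪ B = R → Disjoint A B →
    α * min (Nat.card {e : E // Out ends R e ∧ Out ends A e} : ℝ)
        (Nat.card {e : E // Out ends R e ∧ Out ends B e}) ≤ crossCard ends A B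

/-- `R` is `α`-well-linked for the edge set `E' ⊆ out(R)`. -/
def WellLinkedFor (ends : E → Sym2 V) (α : ℝ) (R : Set V) (E' : Set E) : Prop :=
  ∀ A B : Set V, A ∪ B = R → Disjoint A B →
    α * min (Nat.card {e : E // e ∈ E' ∧ Out ends A e} : ℝ)
        (Nat.card {e : E // e ∈ E' ∧ Out ends B e}) ≤ crossCard ends A B

/-- `φ : V → V'` is the quotient map contracting exactly the clusters of `𝒞`. -/
def IsContraction (φ : V → V') (𝒞 : Set (Set V)) : Prop :=
  (∀ S ∈ 𝒞, ∀ u ∈ S, ∀ v ∈ S, φ u = φ v) ∧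
  (∀ u v : V, φ u = φ v → u = v ∨ ∃ S ∈ 𝒞, u ∈ S ∧ v ∈ S)

/-- Amount of flow that the path-flow `F` routes between the vertices `x` and `y`. -/
noncomputable def routed {ends : E → Sym2 V} (F : List (Walk V E ends × ℝ)) (x y : V) : ℝ :=
  (F.map (fun p => if s(p.1.start, p.1.finish) = s(x, y) then p.2 else 0)).sum

/-- Amount of flow that the path-flow `F` routes between the edges `e` and `e'`. -/
noncomputable def routedE {ends : E → Sym2 V} (F : List (Walk V E ends × ℝ)) (e e' : E) : ℝ :=
  (F.map (fun p =>
    if (p.1.fe = some e ∧ p.1.le = some e') ∨ (p.1.fe = some e' ∧ p.1.le = some e)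
    then p.2 else 0)).sum

/-- Total flow of the path-flow `F` through the edge `f` (congestion at `f`,
for unit capacities). -/
noncomputable def congAt {ends : E → Sym2 V} (F : List (Walk V E ends × ℝ)) (f : E) : ℝ :=
  (F.map (fun p => p.2 * (p.1.mult f : ℝ))).sum

/-- All weights of the path-flow are nonnegative. -/
def NonnegWt {ends : E → Sym2 V} (F : List (Walk V E ends × ℝ)) : Prop := ∀ p ∈ F, 0 ≤ p.2


lemma sym2_exists {α : Type*} (q : Sym2 α) : ∃ x y, q = s(x,y) :=
  Sym2.ind (fun x y => ⟨x, y, rfl⟩) q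

lemma natCard_eq_filter {E : Type*} [Fintype E] (P : E → Prop) [DecidablePred P] :
    Nat.card {e // P e} = (Finset.univ.filter P).card := by
  rw [Nat.card_eq_fintype_card, Fintype.card_subtype]

/-- If `𝒮` partitions the non-terminal vertices into `(1/3)`-well-linked
clusters and `H` is obtained from `G` by contracting each cluster, then for every
partition `(TA, TB)` of `T`, `MinCut_H(TA,TB) ≤ 3·MinCut_G(TA,TB)`. -/
theorem stmt1 {V V' E : Type*} [Fintype V] [Fintype V'] [Fintype E]
    (ends : E → Sym2 V) (φ : V → V') (𝒮 : Set (Set V)) (T : Set V)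
    (hdisj : 𝒮.Pairwise Disjoint)
    (hsub : ∀ R ∈ 𝒮, Disjoint R T)
    (hcover : ∀ v : V, v ∉ T → ∃ R ∈ 𝒮, v ∈ R)
    (hwl : ∀ R ∈ 𝒮, WellLinked ends (1 / 3) R)
    (hcontr : IsContraction φ 𝒮)
    (TA TB : Set V) (hpart : TA ∪ TB = T) (hAB : Disjoint TA TB) :
    minCut (fun e => (ends e).map φ) (φ '' TA) (φ '' TB) ≤ 3 * minCut ends TA TB := by
  classical
  have hTAT : TA ⊆ T := by rw [← hpart]; exact Set.subset_union_left
  have hTBT : TB ⊆ T := by rw [← hpart]; exact Set.subset_union_right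
  -- obtain an optimal cut `A` in `G`
  have hmem : minCut ends TA TB ∈
      {n : ℕ | ∃ A : Set V, TA ⊆ A ∧ Disjoint A TB ∧ n = outCard ends A} :=
    Nat.sInf_mem ⟨outCard ends TA, TA, subset_rfl, hAB, rfl⟩
  obtain ⟨A, hTAA, hATB, hAval⟩ := hmem
  -- side cardinalities for each cluster
  set a : Set V → ℕ :=
    fun R => Nat.card {e : E // Out ends R e ∧ Out ends (A ∩ R) e} with ha
  set b : Set V → ℕ :=
    fun R => Nat.card {e : E // Out ends R e ∧ Out ends (R \ A) e} with hb
  set A'' : Set V := TA ∪ {v | ∃ R ∈ 𝒮, ¬ (a R ≤ b R) ∧ v ∈ R} with hA''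
  have hcl_unique : ∀ R ∈ 𝒮, ∀ R' ∈ 𝒮, ∀ v : V, v ∈ R → v ∈ R' → R = R' := by
    intro R hR R' hR' v hv hv'
    by_contra hne
    exact absurd hv' (Set.disjoint_left.mp (hdisj hR hR' hne) hv)
  have hkeep_sub : ∀ R ∈ 𝒮, ¬ (a R ≤ b R) → R ⊆ A'' := by
    intro R hR hk v hv
    rw [hA'']
    exact Or.inr ⟨R, hR, hk, hv⟩
  have hmemA'' : ∀ R ∈ 𝒮, ∀ v ∈ R, (v ∈ A'' ↔ ¬ (a R ≤ b R)) := by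
    intro R hR v hv
    constructor
    · intro hvA
      rw [hA''] at hvA
      rcases hvA with h | ⟨R', hR', hk, hv'⟩
      · exact absurd (hTAT h) (Set.disjoint_left.mp (hsub R hR) hv)
      · rwa [hcl_unique R hR R' hR' v hv hv']
    · intro hk
      exact hkeep_sub R hR hk hv
  have hsat : ∀ x y : V, φ x = φ y → y ∈ A'' → x ∈ A'' := by
    intro x y hxy hy
    rcases hcontr.2 x y hxy with rfl | ⟨S, hS, hxS, hyS⟩
    · exact hy
    · exact hkeep_sub S hS ((hmemA'' S hS y hyS).mp hy) hxS
  have hTAA'' : TA ⊆ A'' := by rw [hA'']; exact Set.subset_union_left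
  have hA''TB : Disjoint A'' TB := by
    rw [Set.disjoint_left]
    intro v hvA hvB
    rw [hA''] at hvA
    rcases hvA with h | ⟨R, hR, _, hvR⟩
    · exact Set.disjoint_left.mp hAB h hvB
    · exact Set.disjoint_left.mp (hsub R hR) hvR (hTBT hvB)
  -- `Out` in `H` matches `Out` in `G` on the saturated set
  have hOutIff : ∀ e : E,
      Out (fun e => (ends e).map φ) (φ '' A'') e ↔ Out ends A'' e := by
    intro e
    constructor
    · rintro ⟨u', v', hm, hu', hv'⟩
      replace hm : Sym2.map φ (ends e) = s(u', v') := hm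
      obtain ⟨x, y, hxy⟩ := sym2_exists (ends e)
      rw [hxy, Sym2.map_pair_eq] at hm
      have himg : ∀ z : V, φ z ∈ φ '' A'' → z ∈ A'' := by
        rintro z ⟨w, hw, hwz⟩
        exact hsat z w hwz.symm hw
      rcases Sym2.eq_iff.mp hm with ⟨h1, h2⟩ | ⟨h1, h2⟩
      · exact ⟨x, y, hxy, himg x (by rw [h1]; exact hu'),
          fun hy => hv' (by rw [← h2]; exact Set.mem_image_of_mem φ hy)⟩
      · exact ⟨y, x, by rw [hxy, Sym2.eq_swap], himg y (by rw [h2]; exact hu'),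
          fun hx => hv' (by rw [← h1]; exact Set.mem_image_of_mem φ hx)⟩
    · rintro ⟨u, v, hm, hu, hv⟩
      refine ⟨φ u, φ v, by show Sym2.map φ (ends e) = _; rw [hm, Sym2.map_pair_eq], Set.mem_image_of_mem φ hu, ?_⟩
      rintro ⟨w, hw, hwu⟩
      exact hv (hsat v w hwu.symm hw)
  have hOutCardEq : outCard (fun e => (ends e).map φ) (φ '' A'') = outCard ends A'' :=
    Nat.card_congr (Equiv.subtypeEquivRight hOutIff)
  -- the contracted cut is a candidate in `H`
  have hHle : minCut (fun e => (ends e).map φ) (φ '' TA) (φ '' TB) ≤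
      outCard (fun e => (ends e).map φ) (φ '' A'') := by
    apply Nat.sInf_le
    refine ⟨φ '' A'', Set.image_mono hTAA'', ?_, rfl⟩
    rw [Set.disjoint_left]
    rintro x ⟨u, hu, rfl⟩ ⟨w, hw, hwu⟩
    exact Set.disjoint_left.mp hA''TB (hsat w u hwu hu) hw
  -- main case analysis
  have hmain : ∀ e : E, Out ends A'' e → Out ends A e ∨
      ∃ R ∈ 𝒮, Out ends R e ∧
        Out ends (if a R ≤ b R then A ∩ R else R \ A) e := by
    rintro e ⟨u, v, hm, hu, hv⟩
    by_cases huA : u ∈ A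
    · by_cases hvA : v ∈ A
      · right
        have hvT : v ∉ T := by
          intro hvT
          rw [← hpart] at hvT
          rcases hvT with h | h
          · exact hv (hTAA'' h)
          · exact Set.disjoint_left.mp hATB hvA h
        obtain ⟨R, hR, hvR⟩ := hcover v hvT
        have hkR : a R ≤ b R := by
          by_contra hk
          exact hv (hkeep_sub R hR hk hvR)
        have huR : u ∉ R := by
          intro huR
          exact absurd ((hmemA'' R hR u huR).mp hu) (not_not.mpr hkR)
        refine ⟨R, hR, ⟨v, u, by rw [hm, Sym2.eq_swap], hvR, huR⟩, ?_⟩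
        rw [if_pos hkR]
        exact ⟨v, u, by rw [hm, Sym2.eq_swap], ⟨hvA, hvR⟩, fun h => huR h.2⟩
      · exact Or.inl ⟨u, v, hm, huA, hvA⟩
    · right
      have huTA : u ∉ TA := fun h => huA (hTAA h)
      have hu' : ∃ R ∈ 𝒮, ¬ (a R ≤ b R) ∧ u ∈ R := by
        rw [hA''] at hu
        rcases hu with h | h
        · exact absurd h huTA
        · exact h
      obtain ⟨R, hR, hk, huR⟩ := hu'
      have hvR : v ∉ R := fun h => hv (hkeep_sub R hR hk h)
      refine ⟨R, hR, ⟨u, v, hm, huR, hvR⟩, ?_⟩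
      rw [if_neg hk]
      exact ⟨u, v, hm, ⟨huR, huA⟩, fun h => hvR h.1⟩
  have hnocross : ∀ e : E, Out ends A'' e → ∀ R ∈ 𝒮,
      ¬ Crosses ends (A ∩ R) (R \ A) e := by
    rintro e ⟨u, v, hm, hu, hv⟩ R hR ⟨p, q, hm', hp, hq⟩
    have heq : s(u, v) = s(p, q) := hm.symm.trans hm'
    rcases Sym2.eq_iff.mp heq with ⟨h1, h2⟩ | ⟨h1, h2⟩
    · subst h1; subst h2
      have hk : ¬ (a R ≤ b R) := (hmemA'' R hR u hp.2).mp hu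
      exact hv (hkeep_sub R hR hk hq.1)
    · subst h1; subst h2
      have hk : ¬ (a R ≤ b R) := (hmemA'' R hR u hq.1).mp hu
      exact hv (hkeep_sub R hR hk hp.2)
  -- counting with finsets
  set F : Finset (Set V) := (Set.toFinite 𝒮).toFinset with hFdef
  have hFmem : ∀ R : Set V, R ∈ F ↔ R ∈ 𝒮 := by
    intro R; rw [hFdef, Set.Finite.mem_toFinset]
  set DA : Finset E := Finset.univ.filter (fun e => Out ends A'' e) with hDAdef
  set OA : Finset E := Finset.univ.filter (fun e => Out ends A e) with hOAdef
  set YF : Set V → Finset E := fun R => Finset.univ.filter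
    (fun e => Out ends R e ∧ Out ends (if a R ≤ b R then A ∩ R else R \ A) e) with hYFdef
  set CF : Set V → Finset E := fun R => Finset.univ.filter
    (fun e => Crosses ends (A ∩ R) (R \ A) e) with hCFdef
  have hCF_sub : ∀ R ∈ F, CF R ⊆ OA := by
    intro R _ e he
    rw [hCFdef, Finset.mem_filter] at he
    obtain ⟨_, p, q, hm, hp, hq⟩ := he
    rw [hOAdef, Finset.mem_filter]
    exact ⟨Finset.mem_univ e, p, q, hm, hp.1, hq.2⟩
  have hCF_disj : ∀ R ∈ F, ∀ R' ∈ F, R ≠ R' → Disjoint (CF R) (CF R') := by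
    intro R hR R' hR' hne
    rw [Finset.disjoint_left]
    intro e he he'
    rw [hCFdef, Finset.mem_filter] at he he'
    obtain ⟨_, p, q, hm, hp, hq⟩ := he
    obtain ⟨_, p', q', hm', hp', hq'⟩ := he'
    have hp'R : p' ∈ R := by
      rcases Sym2.eq_iff.mp (hm.symm.trans hm') with ⟨h1, _⟩ | ⟨_, h2⟩
      · rw [← h1]; exact hp.2
      · rw [← h2]; exact hq.1
    exact hne (hcl_unique R ((hFmem R).mp hR) R' ((hFmem R').mp hR') p' hp'R hp'.2)
  have hsubset : DA ⊆ (OA \ F.biUnion CF) ∪ F.biUnion YF := by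
    intro e he
    rw [hDAdef, Finset.mem_filter] at he
    have he := he.2
    rcases hmain e he with h | ⟨R, hR, h1, h2⟩
    · apply Finset.mem_union_left
      rw [Finset.mem_sdiff]
      constructor
      · rw [hOAdef, Finset.mem_filter]; exact ⟨Finset.mem_univ e, h⟩
      · rw [Finset.mem_biUnion]
        rintro ⟨R, hRF, heR⟩
        rw [hCFdef, Finset.mem_filter] at heR
        exact hnocross e he R ((hFmem R).mp hRF) heR.2
    · apply Finset.mem_union_right
      rw [Finset.mem_biUnion]
      refine ⟨R, (hFmem R).mpr hR, ?_⟩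
      rw [hYFdef, Finset.mem_filter]
      exact ⟨Finset.mem_univ e, h1, h2⟩
  -- per-cluster bound from well-linkedness
  have hYC : ∀ R ∈ 𝒮, (YF R).card ≤ 3 * (CF R).card := by
    intro R hR
    have hU : (A ∩ R) ∪ (R \ A) = R := by
      rw [Set.inter_comm]
      exact Set.inter_union_diff R A
    have hD : Disjoint (A ∩ R) (R \ A) := by
      rw [Set.disjoint_left]
      rintro v ⟨hvA, _⟩ ⟨_, hv⟩
      exact hv hvA
    have hwlR := hwl R hR (A ∩ R) (R \ A) hU hD
    have hcc : crossCard ends (A ∩ R) (R \ A) = (CF R).card := by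
      rw [hCFdef]; exact natCard_eq_filter _
    have hmin : min (a R) (b R) ≤ 3 * (CF R).card := by
      have hcast : (1 / 3 : ℝ) * min ((a R : ℕ) : ℝ) ((b R : ℕ) : ℝ) ≤ ((CF R).card : ℝ) := by
        simp only [ha, hb]
        rw [hcc] at hwlR
        exact hwlR
      have h2 : ((min (a R) (b R) : ℕ) : ℝ) ≤ 3 * ((CF R).card : ℝ) := by
        rw [Nat.cast_min]
        rcases min_le_iff.mpr (Or.inl (le_refl ((a R : ℕ) : ℝ))) with _
        linarith [hcast]
      exact_mod_cast h2
    have hcardY : (YF R).card = min (a R) (b R) := by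
      by_cases hab : a R ≤ b R
      · rw [min_eq_left hab, ha]
        rw [hYFdef]
        simp only [if_pos hab]
        exact (natCard_eq_filter _).symm
      · rw [min_eq_right (le_of_not_ge hab), hb]
        rw [hYFdef]
        simp only [if_neg hab]
        exact (natCard_eq_filter _).symm
    rw [hcardY]
    exact hmin
  have hUsub : F.biUnion CF ⊆ OA := Finset.biUnion_subset.mpr hCF_sub
  have hcard1 : DA.card ≤ (OA \ F.biUnion CF).card + (F.biUnion YF).card :=
    le_trans (Finset.card_le_card hsubset) (Finset.card_union_le _ _)
  have hcard2 : (OA \ F.biUnion CF).card = OA.card - (F.biUnion CF).card :=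
    Finset.card_sdiff_of_subset hUsub
  have hcard3 : (F.biUnion CF).card = ∑ R ∈ F, (CF R).card :=
    Finset.card_biUnion hCF_disj
  have hcard4 : (F.biUnion YF).card ≤ ∑ R ∈ F, (YF R).card :=
    Finset.card_biUnion_le
  have hcard5 : (∑ R ∈ F, (YF R).card) ≤ 3 * ∑ R ∈ F, (CF R).card := by
    rw [Finset.mul_sum]
    exact Finset.sum_le_sum (fun R hR => hYC R ((hFmem R).mp hR))
  have hUle : (F.biUnion CF).card ≤ OA.card := Finset.card_le_card hUsub
  have hDAc : outCard ends A'' = DA.card := by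
    rw [hDAdef]; exact natCard_eq_filter _
  have hOAc : outCard ends A = OA.card := by
    rw [hOAdef]; exact natCard_eq_filter _
  have hfinal : outCard ends A'' ≤ 3 * outCard ends A := by
    rw [hDAc, hOAc]
    omega
  calc minCut (fun e => (ends e).map φ) (φ '' TA) (φ '' TB)
      ≤ outCard (fun e => (ends e).map φ) (φ '' A'') := hHle
    _ = outCard ends A'' := hOutCardEq
    _ ≤ 3 * outCard ends A := hfinal
    _ = 3 * minCut ends TA TB := by rw [hAval]

end VS
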